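/- For symmetric positive semidefinite $n \times n$ matrices $A$ and $B$ with $A$ positive definite, and conjugate exponents $p, q \in (-\infty, 1)$ with $pq = p + q$, one has $\phi_q(A) \cdot \phi_p(B) \leq \frac{1}{n} \operatorname{Trace}(AB)$, where $\phi_r(C) = (\frac{1}{n}\operatorname{Trace}(C^r))^{1/r}$ for $r \neq 0$ and $\phi_0(C) = (\det C)^{1/n}$. -/

import Mathlib

open Matrix

/-- Real power of a symmetric matrix via the spectral theorem. -/
noncomputable def mpow {n : ℕ} (A : Matrix (Fin n) (Fin n) ℝ) (r : ℝ) :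
    Matrix (Fin n) (Fin n) ℝ :=
  if h : A.IsHermitian then
    (h.eigenvectorUnitary : Matrix (Fin n) (Fin n) ℝ) *
      Matrix.diagonal (fun i => h.eigenvalues i ^ r) *
      (star h.eigenvectorUnitary : Matrix (Fin n) (Fin n) ℝ)
  else A

open scoped Classical in
/-- The matrix mean `φ_r` of a positive semidefinite matrix: `(det C)^{1/n}` for `r = 0`,
`0` for `r < 0` and `C` singular, and `((1/n) Trace C^r)^{1/r}` otherwise. -/
noncomputable def phi {n : ℕ} (C : Matrix (Fin n) (Fin n) ℝ) (r : ℝ) : ℝ :=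
  if r = 0 then C.det ^ ((n : ℝ)⁻¹)
  else if r < 0 ∧ ¬ C.PosDef then 0
  else ((n : ℝ)⁻¹ * (mpow C r).trace) ^ r⁻¹

section Aux

open Finset Real

variable {n : ℕ}

lemma aux_conj_inv {p q : ℝ} (hp : p ≠ 0) (hq : q ≠ 0) (hpq : p * q = p + q) :
    p⁻¹ + q⁻¹ = 1 := by
  field_simp
  linarith

lemma rev_holder (hn : 0 < n) (x y : Fin n → ℝ)
    (hx : ∀ i, 0 ≤ x i) (hy : ∀ i, 0 < y i) {p q : ℝ}
    (hp0 : 0 < p) (hp1 : p < 1) (hq : q < 0) (hpq : p * q = p + q) :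
    (∑ i, x i ^ p) ^ p⁻¹ * (∑ i, y i ^ q) ^ q⁻¹ ≤ ∑ i, x i * y i := by
  have hp1' : (1 : ℝ) - p ≠ 0 := by linarith
  have hinv : p⁻¹ + q⁻¹ = 1 := aux_conj_inv hp0.ne' (ne_of_lt hq) hpq
  have hconj : Real.HolderConjugate p⁻¹ (1 - p)⁻¹ := by
    rw [Real.holderConjugate_iff]
    constructor
    · rw [lt_inv_comm₀ one_pos hp0]; simpa using hp1
    · simp [inv_inv]
  have holder := Real.inner_le_Lp_mul_Lq_of_nonneg Finset.univ hconj
      (f := fun i => (x i * y i) ^ p) (g := fun i => y i ^ (-p))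
      (fun i _ => Real.rpow_nonneg (mul_nonneg (hx i) (hy i).le) p)
      (fun i _ => Real.rpow_nonneg (hy i).le _)
  have hqe : -p * (1 - p)⁻¹ = q := by
    field_simp
    linarith
  have key : (∑ i, x i ^ p) ≤ (∑ i, x i * y i) ^ p * (∑ i, y i ^ q) ^ (1 - p) := by
    calc (∑ i, x i ^ p) = ∑ i, ((x i * y i) ^ p * y i ^ (-p)) := by
          refine Finset.sum_congr rfl fun i _ => ?_
          rw [Real.mul_rpow (hx i) (hy i).le, mul_assoc, ← Real.rpow_add (hy i)]
          simp
      _ ≤ (∑ i, ((x i * y i) ^ p) ^ (p⁻¹)) ^ (1 / p⁻¹) *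
            (∑ i, (y i ^ (-p)) ^ ((1 - p)⁻¹)) ^ (1 / (1 - p)⁻¹) := holder
      _ = (∑ i, x i * y i) ^ p * (∑ i, y i ^ q) ^ (1 - p) := by
          rw [one_div, one_div, inv_inv, inv_inv]
          congr 2
          · refine Finset.sum_congr rfl fun i _ => ?_
            rw [← Real.rpow_mul (mul_nonneg (hx i) (hy i).le), mul_inv_cancel₀ hp0.ne',
              Real.rpow_one]
          · refine Finset.sum_congr rfl fun i _ => ?_
            rw [← Real.rpow_mul (hy i).le, hqe]
  set S := ∑ i, x i * y i with hS
  set T := ∑ i, y i ^ q with hT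
  have hT0 : 0 < T := Finset.sum_pos (fun i _ => Real.rpow_pos_of_pos (hy i) q)
    (by simpa using Finset.univ_nonempty_iff.mpr (Fin.pos_iff_nonempty.mp hn))
  have hS0 : 0 ≤ S := Finset.sum_nonneg fun i _ => mul_nonneg (hx i) (hy i).le
  have hX0 : 0 ≤ ∑ i, x i ^ p := Finset.sum_nonneg fun i _ => Real.rpow_nonneg (hx i) p
  have hexp : (1 - p) * p⁻¹ = -q⁻¹ := by
    have : (1 - p) * p⁻¹ = p⁻¹ - 1 := by field_simp
    rw [this]; linarith
  have step : (∑ i, x i ^ p) ^ p⁻¹ ≤ S * T ^ (-q⁻¹) := by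
    calc (∑ i, x i ^ p) ^ p⁻¹ ≤ ((S ^ p) * T ^ (1 - p)) ^ p⁻¹ :=
          Real.rpow_le_rpow hX0 key (by positivity)
      _ = S * T ^ (-q⁻¹) := by
          rw [Real.mul_rpow (Real.rpow_nonneg hS0 p) (Real.rpow_nonneg hT0.le _),
            ← Real.rpow_mul hS0, ← Real.rpow_mul hT0.le, mul_inv_cancel₀ hp0.ne',
            Real.rpow_one, hexp]
  calc (∑ i, x i ^ p) ^ p⁻¹ * T ^ q⁻¹ ≤ (S * T ^ (-q⁻¹)) * T ^ q⁻¹ :=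
        mul_le_mul_of_nonneg_right step (Real.rpow_nonneg hT0.le _)
    _ = S := by
        rw [mul_assoc, ← Real.rpow_add hT0]
        simp

lemma jensen_rpow_sum (w : Fin n → Fin n → ℝ) (μ : Fin n → ℝ)
    (hμ : ∀ j, 0 ≤ μ j) (hw : ∀ i j, 0 ≤ w i j)
    (hrow : ∀ i, ∑ j, w i j = 1) (hcol : ∀ j, ∑ i, w i j = 1)
    {r : ℝ} (hr0 : 0 < r) (hr1 : r < 1) :
    ∑ j, μ j ^ r ≤ ∑ i, (∑ j, w i j * μ j) ^ r := by
  have concave := Real.concaveOn_rpow hr0.le hr1.le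
  calc ∑ j, μ j ^ r = ∑ j, (∑ i, w i j) * μ j ^ r := by
        refine Finset.sum_congr rfl fun j _ => ?_; rw [hcol j, one_mul]
    _ = ∑ i, ∑ j, w i j * μ j ^ r := by
        rw [Finset.sum_comm]
        exact Finset.sum_congr rfl fun j _ => by rw [Finset.sum_mul]
    _ ≤ ∑ i, (∑ j, w i j * μ j) ^ r := by
        refine Finset.sum_le_sum fun i _ => ?_
        have := concave.le_map_sum (t := Finset.univ) (w := w i) (p := μ)
          (fun j _ => hw i j) (hrow i) (fun j _ => Set.mem_Ici.mpr (hμ j))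
        simpa [smul_eq_mul] using this

lemma prod_le_prod_avg (w : Fin n → Fin n → ℝ) (μ : Fin n → ℝ)
    (hμ : ∀ j, 0 ≤ μ j) (hw : ∀ i j, 0 ≤ w i j)
    (hrow : ∀ i, ∑ j, w i j = 1) (hcol : ∀ j, ∑ i, w i j = 1) :
    ∏ j, μ j ≤ ∏ i, (∑ j, w i j * μ j) := by
  by_cases hpos : ∀ j, 0 < μ j
  · have step : ∀ i, ∏ j, μ j ^ (w i j) ≤ ∑ j, w i j * μ j := fun i =>
      Real.geom_mean_le_arith_mean_weighted Finset.univ (w i) μ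
        (fun j _ => hw i j) (hrow i) (fun j _ => hμ j)
    calc ∏ j, μ j = ∏ j, μ j ^ (∑ i, w i j) := by
          refine Finset.prod_congr rfl fun j _ => ?_; rw [hcol j, Real.rpow_one]
      _ = ∏ i, ∏ j, μ j ^ (w i j) := by
          rw [Finset.prod_comm]
          exact Finset.prod_congr rfl fun j _ => Real.rpow_sum_of_pos (hpos j) _ _
      _ ≤ ∏ i, (∑ j, w i j * μ j) := by
          refine Finset.prod_le_prod (fun i _ => Finset.prod_nonneg fun j _ =>
            Real.rpow_nonneg (hμ j) _) (fun i _ => step i)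
  · push_neg at hpos
    obtain ⟨j0, hj0⟩ := hpos
    have : μ j0 = 0 := le_antisymm hj0 (hμ j0)
    calc ∏ j, μ j = 0 := Finset.prod_eq_zero (Finset.mem_univ j0) this
      _ ≤ _ := Finset.prod_nonneg fun i _ => Finset.sum_nonneg fun j _ =>
          mul_nonneg (hw i j) (hμ j)

lemma trace_diagonal_mul (v : Fin n → ℝ) (M : Matrix (Fin n) (Fin n) ℝ) :
    (Matrix.diagonal v * M).trace = ∑ i, v i * M i i := by
  simp [Matrix.trace, Matrix.diag, Matrix.mul_apply, Matrix.diagonal]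

lemma trace_conj_diag (V : Matrix.unitaryGroup (Fin n) ℝ) (e : Fin n → ℝ)
    (B : Matrix (Fin n) (Fin n) ℝ) :
    (((V : Matrix (Fin n) (Fin n) ℝ) * Matrix.diagonal e *
        (star V : Matrix (Fin n) (Fin n) ℝ)) * B).trace =
      ∑ i, e i * ((star V : Matrix (Fin n) (Fin n) ℝ) * B * V) i i := by
  set W : Matrix (Fin n) (Fin n) ℝ := (V : Matrix (Fin n) (Fin n) ℝ)
  calc (W * Matrix.diagonal e * star W * B).trace
      = (W * (Matrix.diagonal e * (star W * B))).trace := by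
        rw [Matrix.mul_assoc, Matrix.mul_assoc]
    _ = ((Matrix.diagonal e * (star W * B)) * W).trace := Matrix.trace_mul_comm _ _
    _ = (Matrix.diagonal e * (star W * B * W)).trace := by rw [Matrix.mul_assoc]
    _ = ∑ i, e i * (star W * B * W) i i := trace_diagonal_mul _ _

/-- trace of `A*B` via eigenvalues of `A` and diagonal entries of conjugated `B`. -/
lemma trace_mul_eq (A B : Matrix (Fin n) (Fin n) ℝ) (hA : A.IsHermitian) :
    (A * B).trace = ∑ i, hA.eigenvalues i *
      ((star (hA.eigenvectorUnitary : Matrix (Fin n) (Fin n) ℝ)) * B *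
        (hA.eigenvectorUnitary : Matrix (Fin n) (Fin n) ℝ)) i i := by
  have hspec : A = (hA.eigenvectorUnitary : Matrix (Fin n) (Fin n) ℝ) *
      Matrix.diagonal hA.eigenvalues *
      (star (hA.eigenvectorUnitary : Matrix (Fin n) (Fin n) ℝ)) := by
    simpa using hA.spectral_theorem
  calc (A * B).trace
      = (((hA.eigenvectorUnitary : Matrix (Fin n) (Fin n) ℝ) *
          Matrix.diagonal hA.eigenvalues *
          (star (hA.eigenvectorUnitary : Matrix (Fin n) (Fin n) ℝ))) * B).trace := by
        rw [← hspec]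
    _ = _ := trace_conj_diag _ _ _

/-- diagonal entries of a conjugated hermitian matrix are doubly-stochastic averages of
its eigenvalues. -/
lemma diag_conj_eq_avg (C : Matrix (Fin n) (Fin n) ℝ) (hC : C.IsHermitian)
    (U : Matrix.unitaryGroup (Fin n) ℝ) :
    ∃ w : Fin n → Fin n → ℝ, (∀ i j, 0 ≤ w i j) ∧ (∀ i, ∑ j, w i j = 1) ∧
      (∀ j, ∑ i, w i j = 1) ∧
      ∀ i, ((star U : Matrix (Fin n) (Fin n) ℝ) * C * U) i i =
        ∑ j, w i j * hC.eigenvalues j := by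
  set V : Matrix (Fin n) (Fin n) ℝ := (hC.eigenvectorUnitary : Matrix (Fin n) (Fin n) ℝ)
    with hV
  set Um : Matrix (Fin n) (Fin n) ℝ := (U : Matrix (Fin n) (Fin n) ℝ) with hUm
  set W : Matrix (Fin n) (Fin n) ℝ := star Um * V with hW
  have hVV : V * star V = 1 := (Matrix.mem_unitaryGroup_iff).mp hC.eigenvectorUnitary.2
  have hVV' : star V * V = 1 := (Matrix.mem_unitaryGroup_iff').mp hC.eigenvectorUnitary.2
  have hUU : Um * star Um = 1 := (Matrix.mem_unitaryGroup_iff).mp U.2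
  have hUU' : star Um * Um = 1 := (Matrix.mem_unitaryGroup_iff').mp U.2
  have hs : star W = star V * Um := by
    rw [hW, StarMul.star_mul, star_star]
  have hWW : W * star W = 1 := by
    rw [hW, hs, Matrix.mul_assoc, ← Matrix.mul_assoc V, hVV, Matrix.one_mul, hUU']
  have hWW' : star W * W = 1 := by
    rw [hs, hW, Matrix.mul_assoc, ← Matrix.mul_assoc Um, hUU, Matrix.one_mul, hVV']
  refine ⟨fun i j => (W i j) ^ 2, fun i j => sq_nonneg _, ?_, ?_, ?_⟩
  · intro i
    have : (W * star W) i i = 1 := by rw [hWW]; simp [Matrix.one_apply]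
    rw [Matrix.mul_apply] at this
    rw [← this]
    refine Finset.sum_congr rfl fun j _ => ?_
    simp [Matrix.conjTranspose_apply, sq]
  · intro j
    have : (star W * W) j j = 1 := by rw [hWW']; simp [Matrix.one_apply]
    rw [Matrix.mul_apply] at this
    rw [← this]
    refine Finset.sum_congr rfl fun i _ => ?_
    simp [Matrix.conjTranspose_apply, sq]
  · intro i
    have hspec : C = V * Matrix.diagonal hC.eigenvalues * star V := by
      simpa using hC.spectral_theorem
    have hconj : W * Matrix.diagonal hC.eigenvalues * star W =
        star Um * (V * Matrix.diagonal hC.eigenvalues * star V) * Um := by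
      rw [hW, hs]; noncomm_ring
    rw [show star Um * C * Um = W * Matrix.diagonal hC.eigenvalues * star W by
      rw [hconj, ← hspec]]
    rw [Matrix.mul_apply]
    refine Finset.sum_congr rfl fun j _ => ?_
    rw [Matrix.mul_diagonal]
    simp [Matrix.conjTranspose_apply, sq]
    ring

/-- diagonal entries of a conjugation of a PSD matrix are nonnegative. -/
lemma diag_conj_nonneg {C : Matrix (Fin n) (Fin n) ℝ} (hC : C.PosSemidef)
    (U : Matrix (Fin n) (Fin n) ℝ) (i : Fin n) :
    0 ≤ ((star U) * C * U) i i := by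
  have h : (Uᴴ * C * U).PosSemidef := hC.conjTranspose_mul_mul_same U
  have h2 := h.dotProduct_mulVec_nonneg (Pi.single i 1)
  have e : star (Pi.single i 1 : Fin n → ℝ) ⬝ᵥ ((Uᴴ * C * U) *ᵥ Pi.single i 1) =
      (Uᴴ * C * U) i i := by
    simp [Matrix.mulVec_single, dotProduct, Pi.single_apply]
  rw [e] at h2
  rwa [Matrix.star_eq_conjTranspose]

lemma mpow_trace (C : Matrix (Fin n) (Fin n) ℝ) (hC : C.IsHermitian) (r : ℝ) :
    (mpow C r).trace = ∑ i, hC.eigenvalues i ^ r := by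
  unfold mpow
  rw [dif_pos hC]
  set V : Matrix (Fin n) (Fin n) ℝ := (hC.eigenvectorUnitary : Matrix (Fin n) (Fin n) ℝ)
  have hVV' : star V * V = 1 := (Matrix.mem_unitaryGroup_iff').mp hC.eigenvectorUnitary.2
  calc (V * Matrix.diagonal (fun i => hC.eigenvalues i ^ r) * star V).trace
      = (star V * (V * Matrix.diagonal (fun i => hC.eigenvalues i ^ r))).trace := by
        rw [Matrix.trace_mul_comm]
    _ = (Matrix.diagonal (fun i => hC.eigenvalues i ^ r)).trace := by
        rw [← Matrix.mul_assoc, hVV', Matrix.one_mul]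
    _ = ∑ i, hC.eigenvalues i ^ r := Matrix.trace_diagonal _

lemma phi_eq (C : Matrix (Fin n) (Fin n) ℝ) (hC : C.IsHermitian) {r : ℝ}
    (h0 : ¬ r = 0) (h1 : ¬ (r < 0 ∧ ¬ C.PosDef)) :
    phi C r = ((n : ℝ)⁻¹ * ∑ i, hC.eigenvalues i ^ r) ^ r⁻¹ := by
  unfold phi
  rw [if_neg h0, if_neg h1, mpow_trace C hC r]

lemma combine (hn : 0 < n) (y d : Fin n → ℝ) {s t : ℝ}
    (hs0 : 0 < s) (hs1 : s < 1) (ht : t < 0) (hst : s * t = s + t)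
    (hy : ∀ i, 0 < y i) (hd : ∀ i, 0 ≤ d i) (X : ℝ) (hX0 : 0 ≤ X)
    (hX : X ≤ ∑ i, d i ^ s) :
    ((n : ℝ)⁻¹ * X) ^ s⁻¹ * ((n : ℝ)⁻¹ * ∑ i, y i ^ t) ^ t⁻¹ ≤
      (n : ℝ)⁻¹ * ∑ i, d i * y i := by
  have hn0 : (0 : ℝ) < (n : ℝ)⁻¹ := by positivity
  have hT0 : 0 < ∑ i, y i ^ t := Finset.sum_pos
    (fun i _ => Real.rpow_pos_of_pos (hy i) t)
    (by simpa using Finset.univ_nonempty_iff.mpr (Fin.pos_iff_nonempty.mp hn))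
  have hD0 : 0 ≤ ∑ i, d i ^ s := Finset.sum_nonneg fun i _ => Real.rpow_nonneg (hd i) s
  have hrh := rev_holder hn d y hd hy hs0 hs1 ht hst
  have hinv : s⁻¹ + t⁻¹ = 1 := aux_conj_inv hs0.ne' (ne_of_lt ht) hst
  calc ((n : ℝ)⁻¹ * X) ^ s⁻¹ * ((n : ℝ)⁻¹ * ∑ i, y i ^ t) ^ t⁻¹
      ≤ ((n : ℝ)⁻¹ * ∑ i, d i ^ s) ^ s⁻¹ * ((n : ℝ)⁻¹ * ∑ i, y i ^ t) ^ t⁻¹ := by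
        refine mul_le_mul_of_nonneg_right ?_ (Real.rpow_nonneg (by positivity) _)
        exact Real.rpow_le_rpow (by positivity)
          (mul_le_mul_of_nonneg_left hX hn0.le) (by positivity)
    _ = ((n : ℝ)⁻¹ ^ s⁻¹ * (n : ℝ)⁻¹ ^ t⁻¹) *
          ((∑ i, d i ^ s) ^ s⁻¹ * (∑ i, y i ^ t) ^ t⁻¹) := by
        rw [Real.mul_rpow hn0.le hD0, Real.mul_rpow hn0.le hT0.le]
        ring
    _ = (n : ℝ)⁻¹ * ((∑ i, d i ^ s) ^ s⁻¹ * (∑ i, y i ^ t) ^ t⁻¹) := by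
        rw [← Real.rpow_add hn0, hinv, Real.rpow_one]
    _ ≤ (n : ℝ)⁻¹ * ∑ i, d i * y i := mul_le_mul_of_nonneg_left hrh hn0.le

end Aux

/-- matrix Hölder inequality: for `A ≻ 0`, `B ⪰ 0` and conjugate
exponents `p, q < 1` with `pq = p + q`, one has `φ_q(A) φ_p(B) ≤ (1/n) Trace(AB)`. -/
theorem stmt1 {n : ℕ} (hn : 0 < n)
    (A B : Matrix (Fin n) (Fin n) ℝ) (hA : A.PosDef) (hB : B.PosSemidef)
    (p q : ℝ) (hp : p < 1) (hq : q < 1) (hpq : p * q = p + q) :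
    phi A q * phi B p ≤ (1 / (n : ℝ)) * (A * B).trace := by
  have hA1 : A.IsHermitian := hA.1
  have hB1 : B.IsHermitian := hB.1
  have ha : ∀ i, 0 < hA1.eigenvalues i := fun i => hA.eigenvalues_pos i
  have hμ : ∀ i, 0 ≤ hB1.eigenvalues i := fun i => hB.eigenvalues_nonneg i
  have hn0 : (0 : ℝ) < (n : ℝ)⁻¹ := by positivity
  rw [one_div]
  rcases lt_trichotomy p 0 with hp0 | hp0 | hp0
  · -- p < 0, hence 0 < q < 1
    have hq0 : 0 < q := by nlinarith [mul_pos (neg_pos.2 hp0) (sub_pos.2 hq)]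
    by_cases hBpd : B.PosDef
    · -- diagonalize B
      set V := hB1.eigenvectorUnitary with hVdef
      obtain ⟨w, hw, hrow, hcol, havg⟩ := diag_conj_eq_avg A hA1 V
      set c : Fin n → ℝ := fun i =>
        ((star V : Matrix (Fin n) (Fin n) ℝ) * A * V) i i with hc
      have hμpos : ∀ i, 0 < hB1.eigenvalues i := fun i => hBpd.eigenvalues_pos i
      have hcnn : ∀ i, 0 ≤ c i := fun i => diag_conj_nonneg hA.posSemidef _ i
      have htr : (A * B).trace = ∑ i, c i * hB1.eigenvalues i := by
        rw [Matrix.trace_mul_comm, trace_mul_eq B A hB1]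
        exact Finset.sum_congr rfl fun i _ => mul_comm _ _
      have hjen : (∑ i, hA1.eigenvalues i ^ q) ≤ ∑ i, c i ^ q := by
        have := jensen_rpow_sum w hA1.eigenvalues (fun i => (ha i).le) hw hrow hcol hq0 hq
        calc (∑ i, hA1.eigenvalues i ^ q) ≤ ∑ i, (∑ j, w i j * hA1.eigenvalues j) ^ q := this
          _ = ∑ i, c i ^ q := Finset.sum_congr rfl fun i _ => by rw [← havg i]
      rw [phi_eq A hA1 hq0.ne' (by push_neg; intro h; exact absurd h (not_lt.mpr hq0.le)),
        phi_eq B hB1 (ne_of_lt hp0) (by push_neg; intro _; simpa using hBpd)]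
      have := combine hn hB1.eigenvalues c hq0 hq hp0 (by linarith [hpq] : q * p = q + p)
        hμpos hcnn (∑ i, hA1.eigenvalues i ^ q)
        (Finset.sum_nonneg fun i _ => Real.rpow_nonneg (ha i).le q) hjen
      rw [htr]
      exact this
    · -- B singular: φ_p(B) = 0
      have hphiB : phi B p = 0 := by
        unfold phi
        rw [if_neg (ne_of_lt hp0), if_pos ⟨hp0, hBpd⟩]
      rw [hphiB, mul_zero]
      have htr : (A * B).trace = ∑ i, hA1.eigenvalues i *
          ((star (hA1.eigenvectorUnitary : Matrix (Fin n) (Fin n) ℝ)) * B *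
            (hA1.eigenvectorUnitary : Matrix (Fin n) (Fin n) ℝ)) i i :=
        trace_mul_eq A B hA1
      have : 0 ≤ (A * B).trace := by
        rw [htr]
        exact Finset.sum_nonneg fun i _ =>
          mul_nonneg (ha i).le (diag_conj_nonneg hB _ i)
      positivity
  · -- p = 0, hence q = 0
    subst hp0
    have hq0 : q = 0 := by linarith [hpq]
    subst hq0
    unfold phi
    rw [if_pos rfl, if_pos rfl]
    set U := hA1.eigenvectorUnitary with hUdef
    obtain ⟨w, hw, hrow, hcol, havg⟩ := diag_conj_eq_avg B hB1 U
    set d : Fin n → ℝ := fun i =>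
      ((star U : Matrix (Fin n) (Fin n) ℝ) * B * U) i i with hd
    have hdnn : ∀ i, 0 ≤ d i := fun i => diag_conj_nonneg hB _ i
    have htr : (A * B).trace = ∑ i, hA1.eigenvalues i * d i := trace_mul_eq A B hA1
    have hdetA : A.det = ∏ i, hA1.eigenvalues i := by
      simpa using hA1.det_eq_prod_eigenvalues
    have hdetB : B.det = ∏ i, hB1.eigenvalues i := by
      simpa using hB1.det_eq_prod_eigenvalues
    have hprod : B.det ≤ ∏ i, d i := by
      rw [hdetB]
      calc ∏ i, hB1.eigenvalues i ≤ ∏ i, (∑ j, w i j * hB1.eigenvalues j) :=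
            prod_le_prod_avg w hB1.eigenvalues hμ hw hrow hcol
        _ = ∏ i, d i := Finset.prod_congr rfl fun i _ => (havg i).symm
    have hamgm : ∏ i, (hA1.eigenvalues i * d i) ^ ((n : ℝ)⁻¹) ≤
        ∑ i, (n : ℝ)⁻¹ * (hA1.eigenvalues i * d i) := by
      refine Real.geom_mean_le_arith_mean_weighted Finset.univ _ _
        (fun i _ => hn0.le) ?_ (fun i _ => mul_nonneg (ha i).le (hdnn i))
      simp [Finset.sum_const, Finset.card_univ]
      field_simp
    have hsplit : ∏ i, (hA1.eigenvalues i * d i) ^ ((n : ℝ)⁻¹) =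
        (∏ i, hA1.eigenvalues i) ^ ((n : ℝ)⁻¹) * (∏ i, d i) ^ ((n : ℝ)⁻¹) := by
      rw [Real.finset_prod_rpow Finset.univ _
        (fun i _ => mul_nonneg (ha i).le (hdnn i)) _, Finset.prod_mul_distrib,
        Real.mul_rpow (Finset.prod_nonneg fun i _ => (ha i).le)
          (Finset.prod_nonneg fun i _ => hdnn i)]
    calc A.det ^ ((n : ℝ)⁻¹) * B.det ^ ((n : ℝ)⁻¹)
        ≤ (∏ i, hA1.eigenvalues i) ^ ((n : ℝ)⁻¹) * (∏ i, d i) ^ ((n : ℝ)⁻¹) := by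
          rw [hdetA]
          refine mul_le_mul_of_nonneg_left ?_ (Real.rpow_nonneg
            (Finset.prod_nonneg fun i _ => (ha i).le) _)
          refine Real.rpow_le_rpow ?_ hprod (by positivity)
          rw [hdetB]
          exact Finset.prod_nonneg fun i _ => hμ i
      _ = ∏ i, (hA1.eigenvalues i * d i) ^ ((n : ℝ)⁻¹) := hsplit.symm
      _ ≤ ∑ i, (n : ℝ)⁻¹ * (hA1.eigenvalues i * d i) := hamgm
      _ = (n : ℝ)⁻¹ * (A * B).trace := by
          rw [htr, Finset.mul_sum]
  · -- 0 < p < 1, hence q < 0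
    have hq0 : q < 0 := by nlinarith [mul_pos hp0 (sub_pos.2 hq)]
    set U := hA1.eigenvectorUnitary with hUdef
    obtain ⟨w, hw, hrow, hcol, havg⟩ := diag_conj_eq_avg B hB1 U
    set d : Fin n → ℝ := fun i =>
      ((star U : Matrix (Fin n) (Fin n) ℝ) * B * U) i i with hd
    have hdnn : ∀ i, 0 ≤ d i := fun i => diag_conj_nonneg hB _ i
    have htr : (A * B).trace = ∑ i, hA1.eigenvalues i * d i := trace_mul_eq A B hA1
    have hjen : (∑ i, hB1.eigenvalues i ^ p) ≤ ∑ i, d i ^ p := by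
      have := jensen_rpow_sum w hB1.eigenvalues hμ hw hrow hcol hp0 hp
      calc (∑ i, hB1.eigenvalues i ^ p) ≤ ∑ i, (∑ j, w i j * hB1.eigenvalues j) ^ p := this
        _ = ∑ i, d i ^ p := Finset.sum_congr rfl fun i _ => by rw [← havg i]
    rw [phi_eq A hA1 (ne_of_lt hq0) (by push_neg; intro _; simpa using hA),
      phi_eq B hB1 hp0.ne' (by push_neg; intro h; exact absurd h (not_lt.mpr hp0.le))]
    have := combine hn hA1.eigenvalues d hp0 hp hq0 hpq ha hdnn
      (∑ i, hB1.eigenvalues i ^ p)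
      (Finset.sum_nonneg fun i _ => Real.rpow_nonneg (hμ i) p) hjen
    rw [htr]
    calc ((n : ℝ)⁻¹ * ∑ i, hA1.eigenvalues i ^ q) ^ q⁻¹ *
          ((n : ℝ)⁻¹ * ∑ i, hB1.eigenvalues i ^ p) ^ p⁻¹
        = ((n : ℝ)⁻¹ * ∑ i, hB1.eigenvalues i ^ p) ^ p⁻¹ *
          ((n : ℝ)⁻¹ * ∑ i, hA1.eigenvalues i ^ q) ^ q⁻¹ := mul_comm _ _
      _ ≤ (n : ℝ)⁻¹ * ∑ i, d i * hA1.eigenvalues i := this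
      _ = (n : ℝ)⁻¹ * ∑ i, hA1.eigenvalues i * d i := by
          rw [show (∑ i, d i * hA1.eigenvalues i) = ∑ i, hA1.eigenvalues i * d i from
            Finset.sum_congr rfl fun i _ => mul_comm _ _]
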